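/- Let (γ_k) be a decreasing, strictly positive sequence with 0 < γ_0 < 1/(4 L_max). Then the proximal SGD iterates satisfy, for every t ≥ 1, E[F(x̄_t) − F(x*)] ≤ ( ‖x_0 − x*‖² + 2γ_0 (F(x_0) − F(x*)) + 4σ² Σ_{k=0}^{t−1} γ_k² ) / ( 2 Σ_{i=0}^{t−1} (1 − 4 γ_i L_max) γ_i ), where σ² = (1/n) Σ_{i=1}^n ‖∇f_i(x*)‖² and x̄_t = Σ_{k=0}^{t−1} w_k x_k with weights w_k = (1 − 4γ_k L_max) γ_k / Σ_{i=0}^{t−1} (1 − 4γ_i L_max) γ_i. -/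

import Mathlib

open MeasureTheory ProbabilityTheory Finset
open scoped RealInnerProductSpace

section DetAux
variable {E : Type*} [NormedAddCommGroup E] [InnerProductSpace ℝ E]

lemma norm_combo_sq (a b : E) (t : ℝ) :
    ‖(1 - t) • a + t • b‖ ^ 2
      = (1 - t) * ‖a‖ ^ 2 + t * ‖b‖ ^ 2 - t * (1 - t) * ‖b - a‖ ^ 2 := by
  simp only [← real_inner_self_eq_norm_sq, inner_add_left, inner_add_right, inner_sub_left,
    inner_sub_right, real_inner_smul_left, real_inner_smul_right, real_inner_comm a b]
  ring

lemma prox_strong (R : E → ℝ) (hR : ConvexOn ℝ Set.univ R) {γ : ℝ} (hγ : 0 < γ)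
    (p y : E) (hp : ∀ u, γ * R p + ‖p - y‖ ^ 2 / 2 ≤ γ * R u + ‖u - y‖ ^ 2 / 2) (u : E) :
    γ * R p + ‖p - y‖ ^ 2 / 2 + ‖u - p‖ ^ 2 / 2 ≤ γ * R u + ‖u - y‖ ^ 2 / 2 := by
  have key : ∀ t : ℝ, t ∈ Set.Ioo (0:ℝ) 1 →
      (1 - t) / 2 * ‖u - p‖ ^ 2
        ≤ (γ * R u + ‖u - y‖ ^ 2 / 2) - (γ * R p + ‖p - y‖ ^ 2 / 2) := by
    intro t ht
    have hz := hp ((1 - t) • p + t • u)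
    have hRz : R ((1 - t) • p + t • u) ≤ (1 - t) * R p + t * R u :=
      hR.2 (Set.mem_univ p) (Set.mem_univ u) (by linarith [ht.2]) ht.1.le (by ring)
    have hsplit : (1 - t) • p + t • u - y = (1 - t) • (p - y) + t • (u - y) := by
      module
    have hn : ‖(1 - t) • p + t • u - y‖ ^ 2
        = (1 - t) * ‖p - y‖ ^ 2 + t * ‖u - y‖ ^ 2 - t * (1 - t) * ‖u - p‖ ^ 2 := by
      rw [hsplit, norm_combo_sq]
      congr 2
      rw [show (u - y) - (p - y) = u - p by abel]
    rw [hn] at hz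
    nlinarith [hz, mul_le_mul_of_nonneg_left hRz hγ.le, ht.1]
  have htend : Filter.Tendsto (fun t : ℝ => (1 - t) / 2 * ‖u - p‖ ^ 2)
      (nhdsWithin 0 (Set.Ioi 0)) (nhds ((1 - 0) / 2 * ‖u - p‖ ^ 2)) := by
    apply Filter.Tendsto.mono_left _ nhdsWithin_le_nhds
    exact (Continuous.tendsto (by continuity) 0)
  have hle := le_of_tendsto htend
    (Filter.eventually_of_mem (Ioo_mem_nhdsGT_of_mem ⟨le_refl (0:ℝ), one_pos⟩) key)
  simp only [sub_zero] at hle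
  linarith

lemma subgrad_opt (L : ℝ) (fb R : E → ℝ) (gb : E → E) (xstar : E)
    (hR : ConvexOn ℝ Set.univ R)
    (hsm : ∀ w, fb w ≤ fb xstar + ⟪gb xstar, w - xstar⟫ + L / 2 * ‖w - xstar‖ ^ 2)
    (hmin : ∀ w, fb xstar + R xstar ≤ fb w + R w) (u : E) :
    R xstar - ⟪gb xstar, u - xstar⟫ ≤ R u := by
  have key : ∀ t : ℝ, t ∈ Set.Ioo (0:ℝ) 1 →
      -(L * t / 2 * ‖u - xstar‖ ^ 2) ≤ R u - R xstar + ⟪gb xstar, u - xstar⟫ := by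
    intro t ht
    set z := (1 - t) • xstar + t • u with hzdef
    have hz1 : z - xstar = t • (u - xstar) := by rw [hzdef, smul_sub]; module
    have h1 := hmin z
    have h2 := hsm z
    have hRz : R z ≤ (1 - t) * R xstar + t * R u :=
      hR.2 (Set.mem_univ xstar) (Set.mem_univ u) (by linarith [ht.2]) ht.1.le (by ring)
    rw [hz1] at h2
    rw [real_inner_smul_right, norm_smul, Real.norm_eq_abs, abs_of_pos ht.1, mul_pow] at h2
    have hmul : 0 ≤ t * (R u - R xstar + ⟪gb xstar, u - xstar⟫ + L * t / 2 * ‖u - xstar‖ ^ 2) := by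
      nlinarith [h1, h2, hRz]
    have := (mul_nonneg_iff_of_pos_left ht.1).mp hmul
    linarith
  have htend : Filter.Tendsto (fun t : ℝ => -(L * t / 2 * ‖u - xstar‖ ^ 2))
      (nhdsWithin 0 (Set.Ioi 0)) (nhds (-(L * 0 / 2 * ‖u - xstar‖ ^ 2))) := by
    apply Filter.Tendsto.mono_left _ nhdsWithin_le_nhds
    exact (Continuous.tendsto (by continuity) 0)
  have hle := le_of_tendsto htend
    (Filter.eventually_of_mem (Ioo_mem_nhdsGT_of_mem ⟨le_refl (0:ℝ), one_pos⟩) key)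
  simp only [mul_zero, zero_div, zero_mul, neg_zero] at hle
  linarith [hle]

lemma cocoercive (L : ℝ) (hL : 0 < L) (fi : E → ℝ) (gi : E → E) (xstar y : E)
    (hsm : ∀ a b, fi b ≤ fi a + ⟪gi a, b - a⟫ + L / 2 * ‖b - a‖ ^ 2)
    (hcv : ∀ a b, fi a + ⟪gi a, b - a⟫ ≤ fi b) :
    ‖gi y - gi xstar‖ ^ 2 ≤ 2 * L * (fi y - fi xstar - ⟪gi xstar, y - xstar⟫) := by
  set w := gi y - gi xstar with hw
  set z := y - L⁻¹ • w with hz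
  have hzy : z - y = -(L⁻¹ • w) := by rw [hz]; abel
  have hzx : z - xstar = (y - xstar) - L⁻¹ • w := by rw [hz]; abel
  have h1 := hsm y z
  have h2 := hcv xstar z
  rw [hzy] at h1
  rw [hzx] at h2
  rw [inner_neg_right, real_inner_smul_right, norm_neg, norm_smul, Real.norm_eq_abs,
    abs_of_pos (inv_pos.mpr hL), mul_pow] at h1
  rw [inner_sub_right, real_inner_smul_right] at h2
  have hid : ⟪gi y, w⟫ - ⟪gi xstar, w⟫ = ‖w‖ ^ 2 := by
    rw [← inner_sub_left, ← hw, real_inner_self_eq_norm_sq]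
  have e2 : L / 2 * (L⁻¹ ^ 2 * ‖w‖ ^ 2) = L⁻¹ * ‖w‖ ^ 2 / 2 := by
    field_simp
  rw [e2] at h1
  have hid' : L⁻¹ * ⟪gi y, w⟫ - L⁻¹ * ⟪gi xstar, w⟫ = L⁻¹ * ‖w‖ ^ 2 := by
    rw [← mul_sub, hid]
  have h3 : L⁻¹ * ‖w‖ ^ 2 / 2 ≤ fi y - fi xstar - ⟪gi xstar, y - xstar⟫ := by
    linarith [h1, h2, hid']
  have h4 := mul_le_mul_of_nonneg_left h3 (by positivity : (0:ℝ) ≤ 2 * L)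
  have e3 : 2 * L * (L⁻¹ * ‖w‖ ^ 2 / 2) = ‖w‖ ^ 2 := by
    field_simp
  linarith [h4, e3]

end DetAux
open scoped RealInnerProductSpace

section StepI
variable {E : Type*} [NormedAddCommGroup E] [InnerProductSpace ℝ E]

lemma step_i (L γ : ℝ) (hγ : 0 < γ) (hγL : γ * L ≤ 1 / 4)
    (fi fb R : E → ℝ) (gi gb : E → E) (y xstar p : E)
    (hconv_i : fi y + ⟪gi y, xstar - y⟫ ≤ fi xstar)
    (hsm_b : fb p ≤ fb y + ⟪gb y, p - y⟫ + L / 2 * ‖p - y‖ ^ 2)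
    (hprox1 : γ * R p + ‖p - (y - γ • gi y)‖ ^ 2 / 2 + ‖xstar - p‖ ^ 2 / 2
      ≤ γ * R xstar + ‖xstar - (y - γ • gi y)‖ ^ 2 / 2) :
    ‖p - xstar‖ ^ 2 + 2 * γ * ((fb p + R p) - (fb xstar + R xstar))
      ≤ ‖y - xstar‖ ^ 2 + 2 * γ * (fb y - fi y) + 2 * γ * (fi xstar - fb xstar)
        + 2 * γ ^ 2 * ‖gb y - gi y‖ ^ 2 := by
  -- expand the two prox norms
  have e1 : p - (y - γ • gi y) = (p - y) + γ • gi y := by abel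
  have e2 : xstar - (y - γ • gi y) = (xstar - y) + γ • gi y := by abel
  rw [e1, e2, norm_add_sq_real, norm_add_sq_real, real_inner_smul_right,
    real_inner_smul_right] at hprox1
  -- hprox1 now linear in the atoms
  have hps : ‖p - xstar‖ ^ 2 = ‖xstar - p‖ ^ 2 := by rw [norm_sub_rev]
  -- Cauchy–Schwarz step
  have hcs : ⟪gb y - gi y, p - y⟫ ≤ ‖gb y - gi y‖ * ‖p - y‖ := real_inner_le_norm _ _
  have h6 : 2 * γ * (⟪gb y, p - y⟫ - ⟪gi y, p - y⟫)
      ≤ 2 * γ ^ 2 * ‖gb y - gi y‖ ^ 2 + ‖p - y‖ ^ 2 / 2 := by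
    have hinner : ⟪gb y, p - y⟫ - ⟪gi y, p - y⟫ = ⟪gb y - gi y, p - y⟫ := by
      rw [inner_sub_left]
    rw [hinner]
    nlinarith [sq_nonneg (2 * γ * ‖gb y - gi y‖ - ‖p - y‖), mul_le_mul_of_nonneg_left hcs
      (by positivity : (0:ℝ) ≤ 2 * γ), norm_nonneg (gb y - gi y), norm_nonneg (p - y)]
  -- flip inner in hconv_i and hprox1 consistency
  have hflip : ⟪xstar - y, gi y⟫ = ⟪gi y, xstar - y⟫ := real_inner_comm _ _
  have hflip2 : ⟪p - y, gi y⟫ = ⟪gi y, p - y⟫ := real_inner_comm _ _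
  rw [hflip, hflip2] at hprox1
  -- multiply hsm_b by 2γ
  have h4 := mul_le_mul_of_nonneg_left hsm_b (by positivity : (0:ℝ) ≤ 2 * γ)
  have h3 := mul_le_mul_of_nonneg_left hconv_i (by positivity : (0:ℝ) ≤ 2 * γ)
  have hsnn : (0:ℝ) ≤ ‖p - y‖ ^ 2 := sq_nonneg _
  have hLs : γ * L * ‖p - y‖ ^ 2 ≤ 1 / 4 * ‖p - y‖ ^ 2 :=
    mul_le_mul_of_nonneg_right hγL hsnn
  have hqs : ‖y - xstar‖ ^ 2 = ‖xstar - y‖ ^ 2 := by rw [norm_sub_rev]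
  nlinarith [hprox1, h3, h4, h6, hLs, hps, hqs]
end StepI
open MeasureTheory Finset

/-- Deterministic unfolding of a stochastic recursion indexed by histories. -/
def Xseq {α E : Type*} (step : ℕ → α → E → E) (x0 : E) : ∀ k, (Fin k → α) → E
  | 0, _ => x0
  | k + 1, h => step k (h (Fin.last k)) (Xseq step x0 k (Fin.init h))

lemma Xseq_eq {α E Ω : Type*} (step : ℕ → α → E → E) (x0 : E)
    (x : ℕ → Ω → E) (idx : ℕ → Ω → α) (hx0 : ∀ ω, x 0 ω = x0)
    (hiter : ∀ k ω, x (k + 1) ω = step k (idx k ω) (x k ω)) :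
    ∀ k ω, x k ω = Xseq step x0 k (fun j : Fin k => idx j ω) := by
  intro k
  induction k with
  | zero => intro ω; exact hx0 ω
  | succ k ih =>
    intro ω
    rw [hiter k ω, ih ω]
    have h1 : Fin.init (fun j : Fin (k+1) => idx (j : ℕ) ω) = fun j : Fin k => idx (j : ℕ) ω := by
      funext j; simp [Fin.init]
    simp only [Xseq, h1, Fin.val_last]

lemma sum_pi_succ {α : Type*} [Fintype α] [DecidableEq α] {k : ℕ} (φ : (Fin (k + 1) → α) → ℝ) :
    ∑ h : Fin (k + 1) → α, φ h = ∑ g : Fin k → α, ∑ i : α, φ (Fin.snoc g i) := by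
  let e : (Fin k → α) × α ≃ (Fin (k + 1) → α) :=
    { toFun := fun gi => Fin.snoc gi.1 gi.2
      invFun := fun h => (Fin.init h, h (Fin.last k))
      left_inv := fun gi => by simp [Fin.init_snoc, Fin.snoc_last]
      right_inv := fun h => by simp [Fin.snoc_init_self] }
  calc ∑ h : Fin (k + 1) → α, φ h
      = ∑ gi : (Fin k → α) × α, φ (Fin.snoc gi.1 gi.2) :=
        (Fintype.sum_equiv e (fun gi => φ (Fin.snoc gi.1 gi.2)) φ (fun gi => rfl)).symm
    _ = ∑ g : Fin k → α, ∑ i : α, φ (Fin.snoc g i) := Fintype.sum_prod_type (fun gi => φ (Fin.snoc gi.1 gi.2))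

lemma integral_fintype_comp {Ω ι : Type*} [mΩ : MeasurableSpace Ω] (μ : Measure Ω)
    [IsFiniteMeasure μ] [Fintype ι] [DecidableEq ι] (v : Ω → ι)
    (hv : ∀ c : ι, MeasurableSet {ω | v ω = c}) (Φ : ι → ℝ) :
    Integrable (fun ω => Φ (v ω)) μ ∧
      ∫ ω, Φ (v ω) ∂μ = ∑ c, (μ {ω | v ω = c}).toReal * Φ c := by
  have hrep : (fun ω => Φ (v ω))
      = fun ω => ∑ c, Set.indicator {ω' | v ω' = c} (fun _ => Φ c) ω := by
    funext ω
    rw [Finset.sum_eq_single (v ω)]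
    · rw [Set.indicator_of_mem (by simp : ω ∈ {ω' | v ω' = v ω})]
    · intro c _ hne
      exact Set.indicator_of_notMem (by simpa using fun hc => hne hc.symm) _
    · intro h; exact absurd (Finset.mem_univ _) h
  have hint : ∀ c : ι, Integrable (fun ω => Set.indicator {ω' | v ω' = c} (fun _ => Φ c) ω) μ := by
    intro c
    exact (integrable_indicator_iff (hv c)).mpr
      ((integrableOn_const_iff).mpr (Or.inr (measure_lt_top μ _)))
  constructor
  · rw [hrep]; exact integrable_finset_sum _ (fun c _ => hint c)
  · rw [hrep, integral_finset_sum _ (fun c _ => hint c)]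
    refine Finset.sum_congr rfl (fun c _ => ?_)
    rw [integral_indicator_const _ (hv c), smul_eq_mul]
    rfl
open MeasureTheory ProbabilityTheory Finset

lemma measure_history {Ω : Type*} [mΩ : MeasurableSpace Ω] (μ : Measure Ω)
    {n : ℕ} (idx : ℕ → Ω → Fin n) (hidx_meas : ∀ k, Measurable (idx k))
    (hidx_unif : ∀ k j, μ (idx k ⁻¹' {j}) = (n : ENNReal)⁻¹)
    (hidx_indep : iIndepFun idx μ)
    (k : ℕ) (h : Fin k → Fin n) :
    μ {ω | (fun j : Fin k => idx j ω) = h} = (n : ENNReal)⁻¹ ^ k := by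
  classical
  set sets : ℕ → Set (Fin n) := fun i => if hi : i < k then {h ⟨i, hi⟩} else Set.univ with hsets
  have hset_eq : {ω | (fun j : Fin k => idx j ω) = h} = ⋂ i ∈ Finset.range k, idx i ⁻¹' sets i := by
    ext ω
    simp only [Set.mem_setOf_eq, funext_iff, Set.mem_iInter, Finset.mem_range,
      Set.mem_preimage, hsets]
    constructor
    · intro hω i hi
      rw [dif_pos hi]
      exact hω ⟨i, hi⟩
    · intro hω j
      have := hω j j.2
      rwa [dif_pos j.2, Set.mem_singleton_iff] at this
  rw [hset_eq, (iIndepFun_iff_measure_inter_preimage_eq_mul.mp hidx_indep) (Finset.range k)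
    (fun i _ => by
      by_cases hi : i < k
      · simp only [hsets, dif_pos hi]; exact measurableSet_singleton _
      · simp only [hsets, dif_neg hi]; exact MeasurableSet.univ)]
  rw [Finset.prod_congr rfl (fun i hi => by
    show μ (idx i ⁻¹' sets i) = (n : ENNReal)⁻¹
    rw [hsets]
    simp only [dif_pos (Finset.mem_range.mp hi)]
    exact hidx_unif i _)]
  simp [Finset.prod_const, Finset.card_range]

set_option maxHeartbeats 2000000 in
/-- Corollary 3: proximal SGD for finite sums with uniform i.i.d. sampling,
decreasing step sizes `0 < γ₀ < 1/(4 L_max)`, without bounded gradient assumptions. -/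
theorem stmt_4
    {d n : ℕ} (hn : 0 < n)
    {Ω : Type*} {m0 : MeasurableSpace Ω} {μ : Measure Ω} [IsProbabilityMeasure μ]
    (f : Fin n → EuclideanSpace ℝ (Fin d) → ℝ)
    (f' : Fin n → EuclideanSpace ℝ (Fin d) → EuclideanSpace ℝ (Fin d))
    (Li : Fin n → ℝ)
    -- each f_i is convex and L_i-smooth
    (hsmooth : ∀ i x y, f i y ≤ f i x + ⟪f' i x, y - x⟫ + Li i / 2 * ‖y - x‖ ^ 2)
    (hconv : ∀ i x y, f i x + ⟪f' i x, y - x⟫ ≤ f i y)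
    -- R is convex, F = (1/n) Σ f_i + R, x* a minimizer of F
    (R : EuclideanSpace ℝ (Fin d) → ℝ) (hR : ConvexOn ℝ Set.univ R)
    (xstar : EuclideanSpace ℝ (Fin d))
    (hmin : ∀ y, (n : ℝ)⁻¹ * ∑ i, f i xstar + R xstar ≤ (n : ℝ)⁻¹ * ∑ i, f i y + R y)
    -- prox_{γ R}
    (prox : ℝ → EuclideanSpace ℝ (Fin d) → EuclideanSpace ℝ (Fin d))
    (hprox : ∀ γ : ℝ, 0 < γ → ∀ y u,
      γ * R (prox γ y) + ‖prox γ y - y‖ ^ 2 / 2 ≤ γ * R u + ‖u - y‖ ^ 2 / 2)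
    -- decreasing, strictly positive step sizes with γ₀ < 1/(4 L_max)
    (γ : ℕ → ℝ) (hγpos : ∀ k, 0 < γ k) (hγdec : Antitone γ)
    (hγ0 : γ 0 < 1 / (4 * Finset.univ.sup' ⟨⟨0, hn⟩, Finset.mem_univ _⟩ Li))
    -- i.i.d. indices uniformly distributed on {1,…,n}
    (idx : ℕ → Ω → Fin n) (hidx_meas : ∀ k, Measurable (idx k))
    (hidx_unif : ∀ k j, μ (idx k ⁻¹' {j}) = (n : ENNReal)⁻¹)
    (hidx_indep : iIndepFun idx μ)
    -- the proximal SGD iterates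
    (x : ℕ → Ω → EuclideanSpace ℝ (Fin d)) (x0 : EuclideanSpace ℝ (Fin d))
    (hx0 : ∀ ω, x 0 ω = x0)
    (hiter : ∀ k ω, x (k + 1) ω = prox (γ k) (x k ω - γ k • f' (idx k ω) (x k ω)))
    (t : ℕ) (ht : 1 ≤ t) :
    ∫ ω, ((fun z => (n : ℝ)⁻¹ * ∑ i, f i z + R z)
        (∑ k ∈ range t,
          ((1 - 4 * γ k * Finset.univ.sup' ⟨⟨0, hn⟩, Finset.mem_univ _⟩ Li) * γ k
            / ∑ i ∈ range t,
              (1 - 4 * γ i * Finset.univ.sup' ⟨⟨0, hn⟩, Finset.mem_univ _⟩ Li) * γ i) • x k ω)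
      - ((n : ℝ)⁻¹ * ∑ i, f i xstar + R xstar)) ∂μ
    ≤ (‖x0 - xstar‖ ^ 2
        + 2 * γ 0 * (((n : ℝ)⁻¹ * ∑ i, f i x0 + R x0) - ((n : ℝ)⁻¹ * ∑ i, f i xstar + R xstar))
        + 4 * ((n : ℝ)⁻¹ * ∑ i, ‖f' i xstar‖ ^ 2) * ∑ k ∈ range t, γ k ^ 2)
      / (2 * ∑ i ∈ range t,
          (1 - 4 * γ i * Finset.univ.sup' ⟨⟨0, hn⟩, Finset.mem_univ _⟩ Li) * γ i) := by
    classical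
  set Lm := Finset.univ.sup' ⟨⟨0, hn⟩, Finset.mem_univ _⟩ Li with hLm
  set σsq : ℝ := (n : ℝ)⁻¹ * ∑ i, ‖f' i xstar‖ ^ 2 with hσsq
  set fbar : EuclideanSpace ℝ (Fin d) → ℝ := fun z => (n : ℝ)⁻¹ * ∑ i, f i z with hfbar
  set gbar : EuclideanSpace ℝ (Fin d) → EuclideanSpace ℝ (Fin d) :=
    fun z => (n : ℝ)⁻¹ • ∑ i, f' i z with hgbar
  set F : EuclideanSpace ℝ (Fin d) → ℝ := fun z => (n : ℝ)⁻¹ * ∑ i, f i z + R z with hF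
  have hFsplit : ∀ z, F z = fbar z + R z := fun z => rfl
  have hnR : (0:ℝ) < n := Nat.cast_pos.mpr hn
  have hnne : (n:ℝ) ≠ 0 := hnR.ne'
  have hminF : ∀ y, F xstar ≤ F y := hmin
  have hLpos : 0 < Lm := by
    by_contra hL
    push_neg at hL
    have h4 : (4:ℝ) * Lm ≤ 0 := by linarith
    have hneg : 1 / (4 * Lm) ≤ 0 := by
      rcases lt_or_eq_of_le h4 with h | h
      · exact le_of_lt (div_neg_of_pos_of_neg one_pos h)
      · rw [h]; simp
    linarith [hγpos 0, hγ0]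
  have hLi_le : ∀ i, Li i ≤ Lm := fun i => Finset.le_sup' Li (Finset.mem_univ i)
  have hγ0L : γ 0 * Lm < 1 / 4 := by
    have h4L : (0:ℝ) < 4 * Lm := by linarith
    have h := (lt_div_iff₀ h4L).mp hγ0
    linarith
  have hγkL : ∀ k, γ k * Lm < 1 / 4 := fun k =>
    lt_of_le_of_lt (mul_le_mul_of_nonneg_right (hγdec (Nat.zero_le k)) hLpos.le) hγ0L
  have hsmoothL : ∀ i (a b : EuclideanSpace ℝ (Fin d)),
      f i b ≤ f i a + ⟪f' i a, b - a⟫ + Lm / 2 * ‖b - a‖ ^ 2 := by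
    intro i a b
    have h := hsmooth i a b
    nlinarith [hLi_le i, sq_nonneg ‖b - a‖]
  have hsm_bar : ∀ a b, fbar b ≤ fbar a + ⟪gbar a, b - a⟫ + Lm / 2 * ‖b - a‖ ^ 2 := by
    intro a b
    have hsum : ∑ i, f i b ≤ ∑ i, (f i a + ⟪f' i a, b - a⟫ + Lm / 2 * ‖b - a‖ ^ 2) :=
      Finset.sum_le_sum fun i _ => hsmoothL i a b
    rw [Finset.sum_add_distrib, Finset.sum_add_distrib, Finset.sum_const, ← sum_inner,
      Finset.card_univ, Fintype.card_fin, nsmul_eq_mul] at hsum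
    have h2 := mul_le_mul_of_nonneg_left hsum (inv_nonneg.mpr hnR.le)
    have e1 : ⟪gbar a, b - a⟫ = (n:ℝ)⁻¹ * ⟪∑ i, f' i a, b - a⟫ := by
      rw [hgbar]; exact real_inner_smul_left _ _ _
    have e2 : (n:ℝ)⁻¹ * (∑ i, f i a + ⟪∑ i, f' i a, b - a⟫ + (n:ℝ) * (Lm / 2 * ‖b - a‖ ^ 2))
        = (n:ℝ)⁻¹ * ∑ i, f i a + (n:ℝ)⁻¹ * ⟪∑ i, f' i a, b - a⟫ + Lm / 2 * ‖b - a‖ ^ 2 := by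
      field_simp
    rw [e2] at h2
    rw [hfbar, e1]
    simpa using h2
  have hmin' : ∀ w, fbar xstar + R xstar ≤ fbar w + R w := hmin
  have hsub : ∀ u, R xstar - ⟪gbar xstar, u - xstar⟫ ≤ R u :=
    subgrad_opt Lm fbar R gbar xstar hR (fun w => hsm_bar xstar w) hmin'
  have hgradb : ∀ y, (n:ℝ)⁻¹ * ∑ i, ‖f' i y‖ ^ 2 ≤ 4 * Lm * (F y - F xstar) + 2 * σsq := by
    intro y
    have hper : ∀ i, ‖f' i y‖ ^ 2
        ≤ 4 * Lm * (f i y - f i xstar - ⟪f' i xstar, y - xstar⟫) + 2 * ‖f' i xstar‖ ^ 2 := by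
      intro i
      have hc := cocoercive Lm hLpos (f i) (f' i) xstar y
        (fun a b => hsmoothL i a b) (fun a b => hconv i a b)
      have htri := norm_add_le (f' i y - f' i xstar) (f' i xstar)
      rw [sub_add_cancel] at htri
      nlinarith [hc, mul_self_le_mul_self (norm_nonneg (f' i y)) htri,
        sq_nonneg (‖f' i y - f' i xstar‖ - ‖f' i xstar‖)]
    have hA : (n:ℝ)⁻¹ * ∑ i, (f i y - f i xstar - ⟪f' i xstar, y - xstar⟫)
        = fbar y - fbar xstar - ⟪gbar xstar, y - xstar⟫ := by
      rw [Finset.sum_sub_distrib, Finset.sum_sub_distrib, ← sum_inner]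
      have e1 : ⟪gbar xstar, y - xstar⟫ = (n:ℝ)⁻¹ * ⟪∑ i, f' i xstar, y - xstar⟫ := by
        rw [hgbar]; exact real_inner_smul_left _ _ _
      rw [hfbar, e1]
      ring
    have hsum := Finset.sum_le_sum fun i (_ : i ∈ Finset.univ) => hper i
    rw [Finset.sum_add_distrib, ← Finset.mul_sum, ← Finset.mul_sum] at hsum
    have h2 := mul_le_mul_of_nonneg_left hsum (inv_nonneg.mpr hnR.le)
    have e3 : (n:ℝ)⁻¹ * (4 * Lm * (∑ i, (f i y - f i xstar - ⟪f' i xstar, y - xstar⟫))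
          + 2 * ∑ i, ‖f' i xstar‖ ^ 2)
        = 4 * Lm * ((n:ℝ)⁻¹ * ∑ i, (f i y - f i xstar - ⟪f' i xstar, y - xstar⟫)) + 2 * σsq := by
      rw [hσsq]; ring
    rw [e3, hA] at h2
    have h3 : fbar y - fbar xstar - ⟪gbar xstar, y - xstar⟫ ≤ F y - F xstar := by
      have := hsub y
      rw [hFsplit y, hFsplit xstar]
      linarith
    have h4 := mul_le_mul_of_nonneg_left h3 (by linarith : (0:ℝ) ≤ 4 * Lm)
    calc (n:ℝ)⁻¹ * ∑ i, ‖f' i y‖ ^ 2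
        ≤ 4 * Lm * (fbar y - fbar xstar - ⟪gbar xstar, y - xstar⟫) + 2 * σsq := h2
      _ ≤ 4 * Lm * (F y - F xstar) + 2 * σsq := by linarith [h4]
  have hvar : ∀ y, ∑ i, ‖gbar y - f' i y‖ ^ 2 ≤ ∑ i, ‖f' i y‖ ^ 2 := by
    intro y
    have hexp : ∀ i : Fin n, ‖gbar y - f' i y‖ ^ 2
        = ‖gbar y‖ ^ 2 - 2 * ⟪gbar y, f' i y⟫ + ‖f' i y‖ ^ 2 := fun i => norm_sub_sq_real _ _
    have hrwv : ∑ i, ‖gbar y - f' i y‖ ^ 2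
        = ∑ i : Fin n, (‖gbar y‖ ^ 2 - 2 * ⟪gbar y, f' i y⟫ + ‖f' i y‖ ^ 2) :=
      Finset.sum_congr rfl fun i _ => hexp i
    rw [hrwv]
    have hSg : ∑ i, f' i y = (n:ℝ) • gbar y := by
      rw [hgbar, smul_smul, mul_inv_cancel₀ hnne, one_smul]
    have hinner : ∑ i, ⟪gbar y, f' i y⟫ = (n:ℝ) * ‖gbar y‖ ^ 2 := by
      rw [← inner_sum, hSg, real_inner_smul_right, real_inner_self_eq_norm_sq]
    rw [Finset.sum_add_distrib, Finset.sum_sub_distrib, Finset.sum_const, ← Finset.mul_sum,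
      hinner, Finset.card_univ, Fintype.card_fin, nsmul_eq_mul]
    nlinarith [sq_nonneg ‖gbar y‖, hnR]
  have hKEY : ∀ (γk : ℝ), 0 < γk → γk * Lm ≤ 1/4 → ∀ y : EuclideanSpace ℝ (Fin d),
      (n:ℝ)⁻¹ * ∑ i, (‖prox γk (y - γk • f' i y) - xstar‖ ^ 2
          + 2 * γk * (F (prox γk (y - γk • f' i y)) - F xstar))
        ≤ ‖y - xstar‖ ^ 2 + 8 * γk ^ 2 * Lm * (F y - F xstar) + 4 * γk ^ 2 * σsq := by
    intro γk hγk hγL4 y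
    have hper : ∀ i, ‖prox γk (y - γk • f' i y) - xstar‖ ^ 2
          + 2 * γk * (F (prox γk (y - γk • f' i y)) - F xstar)
        ≤ ‖y - xstar‖ ^ 2 + 2 * γk * (fbar y - f i y) + 2 * γk * (f i xstar - fbar xstar)
          + 2 * γk ^ 2 * ‖gbar y - f' i y‖ ^ 2 := by
      intro i
      have hprox1 := prox_strong R hR hγk (prox γk (y - γk • f' i y)) (y - γk • f' i y)
        (fun u => hprox γk hγk (y - γk • f' i y) u) xstar
      have hs := step_i Lm γk hγk hγL4 (f i) fbar R (f' i) gbar y xstar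
        (prox γk (y - γk • f' i y)) (hconv i y xstar) (hsm_bar y _) (by linarith [hprox1])
      rw [hFsplit, hFsplit]
      linarith [hs]
    have hzero1 : ∑ i, (fbar y - f i y) = 0 := by
      rw [Finset.sum_sub_distrib, Finset.sum_const, Finset.card_univ, Fintype.card_fin,
        nsmul_eq_mul]
      show (n:ℝ) * ((n:ℝ)⁻¹ * ∑ i, f i y) - ∑ i, f i y = 0
      rw [← mul_assoc, mul_inv_cancel₀ hnne, one_mul, sub_self]
    have hzero2 : ∑ i, (f i xstar - fbar xstar) = 0 := by
      rw [Finset.sum_sub_distrib, Finset.sum_const, Finset.card_univ, Fintype.card_fin,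
        nsmul_eq_mul]
      show (∑ i, f i xstar) - (n:ℝ) * ((n:ℝ)⁻¹ * ∑ i, f i xstar) = 0
      rw [← mul_assoc, mul_inv_cancel₀ hnne, one_mul, sub_self]
    have hsum := Finset.sum_le_sum fun i (_ : i ∈ Finset.univ) => hper i
    have hsplit : ∑ i : Fin n, (‖y - xstar‖ ^ 2 + 2 * γk * (fbar y - f i y)
          + 2 * γk * (f i xstar - fbar xstar) + 2 * γk ^ 2 * ‖gbar y - f' i y‖ ^ 2)
        = (n:ℝ) * ‖y - xstar‖ ^ 2 + 2 * γk ^ 2 * ∑ i, ‖gbar y - f' i y‖ ^ 2 := by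
      rw [Finset.sum_add_distrib, Finset.sum_add_distrib, Finset.sum_add_distrib,
        Finset.sum_const, Finset.card_univ, Fintype.card_fin, nsmul_eq_mul,
        ← Finset.mul_sum, ← Finset.mul_sum, ← Finset.mul_sum, hzero1, hzero2]
      ring
    rw [hsplit] at hsum
    have hvb := hvar y
    have hgb := hgradb y
    -- ∑‖f' i y‖² ≤ n * (4Lm(Fy−Fx*) + 2σsq)
    have hgb' : ∑ i, ‖f' i y‖ ^ 2 ≤ (n:ℝ) * (4 * Lm * (F y - F xstar) + 2 * σsq) := by
      have := mul_le_mul_of_nonneg_left hgb hnR.le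
      rw [← mul_assoc, mul_inv_cancel₀ hnne, one_mul] at this
      exact this
    have hchain : ∑ i, (‖prox γk (y - γk • f' i y) - xstar‖ ^ 2
          + 2 * γk * (F (prox γk (y - γk • f' i y)) - F xstar))
        ≤ (n:ℝ) * (‖y - xstar‖ ^ 2 + 8 * γk ^ 2 * Lm * (F y - F xstar) + 4 * γk ^ 2 * σsq) := by
      nlinarith [hsum, hvb, hgb', sq_nonneg γk]
    have := mul_le_mul_of_nonneg_left hchain (inv_nonneg.mpr hnR.le)
    rw [← mul_assoc, inv_mul_cancel₀ hnne, one_mul] at this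
    exact this
  -- Part II: reduce expectations to deterministic finite sums
  set step : ℕ → Fin n → EuclideanSpace ℝ (Fin d) → EuclideanSpace ℝ (Fin d) :=
    fun k i z => prox (γ k) (z - γ k • f' i z) with hstepdef
  set X : ∀ k, (Fin k → Fin n) → EuclideanSpace ℝ (Fin d) := Xseq step x0 with hXdef
  have hXeq : ∀ k ω, x k ω = X k (fun j : Fin k => idx j ω) :=
    Xseq_eq step x0 x idx hx0 (fun k ω => hiter k ω)
  set A : ℕ → ℝ := fun k => ((n:ℝ)⁻¹)^k * ∑ h : Fin k → Fin n, ‖X k h - xstar‖ ^ 2 with hAdef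
  set B : ℕ → ℝ := fun k => ((n:ℝ)⁻¹)^k * ∑ h : Fin k → Fin n, (F (X k h) - F xstar) with hBdef
  have hWnn : ∀ k : ℕ, (0:ℝ) ≤ ((n:ℝ)⁻¹)^k := fun k => pow_nonneg (inv_nonneg.mpr hnR.le) k
  have hAnn : ∀ k, 0 ≤ A k := fun k =>
    mul_nonneg (hWnn k) (Finset.sum_nonneg fun h _ => sq_nonneg _)
  have hBnn : ∀ k, 0 ≤ B k := fun k =>
    mul_nonneg (hWnn k) (Finset.sum_nonneg fun h _ => sub_nonneg.mpr (hminF _))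
  have hXsnoc : ∀ (k : ℕ) (g : Fin k → Fin n) (i : Fin n),
      X (k+1) (Fin.snoc g i) = step k i (X k g) := by
    intro k g i
    show Xseq step x0 (k+1) (Fin.snoc g i) = step k i (Xseq step x0 k g)
    simp only [Xseq, Fin.init_snoc, Fin.snoc_last]
  have hstep2 : ∀ k, A (k+1) + 2 * γ (k+1) * B (k+1) + 2 * γ k * (1 - 4 * γ k * Lm) * B k
      ≤ A k + 2 * γ k * B k + 4 * γ k ^ 2 * σsq := by
    intro k
    have hγk := hγpos k
    have hγL4 : γ k * Lm ≤ 1/4 := (hγkL k).le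
    have hsplitS : ∀ ψ : EuclideanSpace ℝ (Fin d) → ℝ,
        ∑ h : Fin (k+1) → Fin n, ψ (X (k+1) h)
          = ∑ g : Fin k → Fin n, ∑ i, ψ (step k i (X k g)) := by
      intro ψ
      rw [sum_pi_succ (fun h => ψ (X (k+1) h))]
      exact Finset.sum_congr rfl fun g _ => Finset.sum_congr rfl fun i _ => by rw [hXsnoc]
    have hg : ∀ g : Fin k → Fin n,
        ∑ i, (‖step k i (X k g) - xstar‖ ^ 2 + 2 * γ (k+1) * (F (step k i (X k g)) - F xstar))
          ≤ (n:ℝ) * (‖X k g - xstar‖ ^ 2 + 8 * γ k ^ 2 * Lm * (F (X k g) - F xstar)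
              + 4 * γ k ^ 2 * σsq) := by
      intro g
      have h2 := hKEY (γ k) hγk hγL4 (X k g)
      have h3 := mul_le_mul_of_nonneg_left h2 hnR.le
      rw [← mul_assoc, mul_inv_cancel₀ hnne, one_mul] at h3
      have h3' : ∑ i, (‖step k i (X k g) - xstar‖ ^ 2
            + 2 * γ k * (F (step k i (X k g)) - F xstar))
          ≤ (n:ℝ) * (‖X k g - xstar‖ ^ 2 + 8 * γ k ^ 2 * Lm * (F (X k g) - F xstar)
              + 4 * γ k ^ 2 * σsq) := h3
      refine le_trans (Finset.sum_le_sum fun i (_ : i ∈ Finset.univ) => ?_) h3'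
      have hFp : 0 ≤ F (step k i (X k g)) - F xstar := sub_nonneg.mpr (hminF _)
      have hγ' : γ (k+1) ≤ γ k := hγdec (Nat.le_succ k)
      have := mul_le_mul_of_nonneg_right hγ' hFp
      linarith [this]
    have hsum2 : ∑ h : Fin (k+1) → Fin n,
          (‖X (k+1) h - xstar‖ ^ 2 + 2 * γ (k+1) * (F (X (k+1) h) - F xstar))
        ≤ (n:ℝ) * ∑ g : Fin k → Fin n,
            (‖X k g - xstar‖ ^ 2 + 8 * γ k ^ 2 * Lm * (F (X k g) - F xstar)
              + 4 * γ k ^ 2 * σsq) := by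
      rw [hsplitS (fun z => ‖z - xstar‖ ^ 2 + 2 * γ (k+1) * (F z - F xstar)), Finset.mul_sum]
      exact Finset.sum_le_sum fun g _ => hg g
    have h4 := mul_le_mul_of_nonneg_left hsum2 (hWnn (k+1))
    have hcancel : ((n:ℝ)⁻¹)^k * (n:ℝ)^k = 1 := by
      rw [← mul_pow, inv_mul_cancel₀ hnne, one_pow]
    have e1 : ((n:ℝ)⁻¹)^(k+1) * (n:ℝ) = ((n:ℝ)⁻¹)^k := by
      rw [pow_succ, mul_assoc, inv_mul_cancel₀ hnne, mul_one]
    have hcard : ((Fintype.card (Fin k → Fin n)) : ℝ) = (n:ℝ)^k := by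
      rw [Fintype.card_fun]
      simp
    have hLHSe : ((n:ℝ)⁻¹)^(k+1) * ∑ h : Fin (k+1) → Fin n,
          (‖X (k+1) h - xstar‖ ^ 2 + 2 * γ (k+1) * (F (X (k+1) h) - F xstar))
        = A (k+1) + 2 * γ (k+1) * B (k+1) := by
      rw [Finset.sum_add_distrib, ← Finset.mul_sum]
      simp only [hAdef, hBdef]
      ring
    have hRHSe : ((n:ℝ)⁻¹)^(k+1) * ((n:ℝ) * ∑ g : Fin k → Fin n,
          (‖X k g - xstar‖ ^ 2 + 8 * γ k ^ 2 * Lm * (F (X k g) - F xstar)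
            + 4 * γ k ^ 2 * σsq))
        = A k + 8 * γ k ^ 2 * Lm * B k + 4 * γ k ^ 2 * σsq := by
      rw [← mul_assoc, e1, Finset.sum_add_distrib, Finset.sum_add_distrib, ← Finset.mul_sum,
        Finset.sum_const, Finset.card_univ, nsmul_eq_mul, hcard]
      rw [mul_add, mul_add, ← mul_assoc (((n:ℝ)⁻¹)^k) ((n:ℝ)^k), hcancel, one_mul]
      simp only [hAdef, hBdef]
      ring
    rw [hLHSe, hRHSe] at h4
    linarith [h4]
  have htel : ∀ m, A m + 2 * γ m * B m
        + ∑ k ∈ Finset.range m, 2 * γ k * (1 - 4 * γ k * Lm) * B k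
      ≤ A 0 + 2 * γ 0 * B 0 + ∑ k ∈ Finset.range m, 4 * γ k ^ 2 * σsq := by
    intro m
    induction m with
    | zero => simp
    | succ m ih =>
      rw [Finset.sum_range_succ, Finset.sum_range_succ]
      linarith [hstep2 m, ih]
  have hA0 : A 0 = ‖x0 - xstar‖ ^ 2 := by
    simp only [hAdef]
    rw [pow_zero, one_mul, Fintype.sum_unique]
    rfl
  have hB0 : B 0 = F x0 - F xstar := by
    simp only [hBdef]
    rw [pow_zero, one_mul, Fintype.sum_unique]
    rfl
  have hconstsum : ∑ k ∈ Finset.range t, 4 * γ k ^ 2 * σsq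
      = 4 * σsq * ∑ k ∈ Finset.range t, γ k ^ 2 := by
    rw [Finset.mul_sum]
    exact Finset.sum_congr rfl fun k _ => by ring
  have hmain : ∑ k ∈ Finset.range t, 2 * γ k * (1 - 4 * γ k * Lm) * B k
      ≤ ‖x0 - xstar‖ ^ 2 + 2 * γ 0 * (F x0 - F xstar)
        + 4 * σsq * ∑ k ∈ Finset.range t, γ k ^ 2 := by
    have h := htel t
    rw [hA0, hB0, hconstsum] at h
    have h1 : 0 ≤ 2 * γ t * B t :=
      mul_nonneg (mul_nonneg (by norm_num) (hγpos t).le) (hBnn t)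
    linarith [hAnn t, h1]
  -- Part III: weights, convexity, Jensen, and integration
  set S := ∑ i ∈ Finset.range t, (1 - 4 * γ i * Lm) * γ i with hSdef
  have htermpos : ∀ k, 0 < (1 - 4 * γ k * Lm) * γ k :=
    fun k => mul_pos (by linarith [hγkL k]) (hγpos k)
  have hSpos : 0 < S := by
    rw [hSdef]
    exact Finset.sum_pos (fun k _ => htermpos k) (Finset.nonempty_range_iff.mpr (by omega))
  set w : ℕ → ℝ := fun k => (1 - 4 * γ k * Lm) * γ k / S with hwdef
  have hwnn : ∀ k, 0 ≤ w k := fun k => div_nonneg (htermpos k).le hSpos.le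
  have hwsum : ∑ k ∈ Finset.range t, w k = 1 := by
    simp only [hwdef]
    rw [← Finset.sum_div, ← hSdef]
    exact div_self hSpos.ne'
  have hfbarconv : ConvexOn ℝ Set.univ fbar := by
    refine ⟨convex_univ, ?_⟩
    intro a _ b _ ta tb hta htb htab
    have hper : ∀ i : Fin n, f i (ta • a + tb • b) ≤ ta * f i a + tb * f i b := by
      intro i
      have h1 := hconv i (ta • a + tb • b) a
      have h2 := hconv i (ta • a + tb • b) b
      have h3 : ta • (a - (ta • a + tb • b)) + tb • (b - (ta • a + tb • b)) = 0 := by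
        have h4 : ta • (ta • a + tb • b) + tb • (ta • a + tb • b) = ta • a + tb • b := by
          rw [← add_smul, htab, one_smul]
        rw [smul_sub, smul_sub]
        calc ta • a - ta • (ta • a + tb • b) + (tb • b - tb • (ta • a + tb • b))
            = (ta • a + tb • b) - (ta • (ta • a + tb • b) + tb • (ta • a + tb • b)) := by abel
          _ = 0 := by rw [h4]; exact sub_self _
      have hcomb : ta * ⟪f' i (ta • a + tb • b), a - (ta • a + tb • b)⟫
          + tb * ⟪f' i (ta • a + tb • b), b - (ta • a + tb • b)⟫ = 0 := by
        rw [← real_inner_smul_right, ← real_inner_smul_right, ← inner_add_right, h3,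
          inner_zero_right]
      have h5 : ta * f i (ta • a + tb • b) + tb * f i (ta • a + tb • b)
          = f i (ta • a + tb • b) := by
        rw [← add_mul, htab, one_mul]
      linarith [mul_le_mul_of_nonneg_left h1 hta, mul_le_mul_of_nonneg_left h2 htb, hcomb, h5]
    have hsum := Finset.sum_le_sum fun i (_ : i ∈ Finset.univ) => hper i
    have h6 := mul_le_mul_of_nonneg_left hsum (inv_nonneg.mpr hnR.le)
    rw [Finset.sum_add_distrib, ← Finset.mul_sum, ← Finset.mul_sum] at h6
    show fbar (ta • a + tb • b) ≤ ta • fbar a + tb • fbar b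
    simp only [smul_eq_mul, hfbar]
    calc (n:ℝ)⁻¹ * ∑ i, f i (ta • a + tb • b)
        ≤ (n:ℝ)⁻¹ * (ta * ∑ i, f i a + tb * ∑ i, f i b) := h6
      _ = ta * ((n:ℝ)⁻¹ * ∑ i, f i a) + tb * ((n:ℝ)⁻¹ * ∑ i, f i b) := by ring
  have hFconv : ConvexOn ℝ Set.univ F := hfbarconv.add hR
  have hJensen : ∀ ω : Ω, F (∑ k ∈ Finset.range t, w k • x k ω) - F xstar
      ≤ ∑ k ∈ Finset.range t, w k * (F (x k ω) - F xstar) := by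
    intro ω
    have hmap := hFconv.map_sum_le (fun k _ => hwnn k) hwsum (fun k _ => Set.mem_univ (x k ω))
    simp only [smul_eq_mul] at hmap
    have hsplit2 : ∑ k ∈ Finset.range t, w k * (F (x k ω) - F xstar)
        = (∑ k ∈ Finset.range t, w k * F (x k ω)) - F xstar := by
      rw [Finset.sum_congr rfl fun k (_ : k ∈ Finset.range t) =>
        mul_sub (w k) (F (x k ω)) (F xstar), Finset.sum_sub_distrib, ← Finset.sum_mul,
        hwsum, one_mul]
    linarith [hmap, hsplit2]
  have hv_meas : ∀ (k : ℕ) (h : Fin k → Fin n),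
      MeasurableSet {ω | (fun j : Fin k => idx j ω) = h} := by
    intro k h
    have hseteq : {ω | (fun j : Fin k => idx j ω) = h} = ⋂ j : Fin k, (idx j) ⁻¹' {h j} := by
      ext ω
      simp [funext_iff]
    rw [hseteq]
    exact MeasurableSet.iInter fun j => (hidx_meas j) (measurableSet_singleton _)
  have hmeasv : ∀ (k : ℕ) (h : Fin k → Fin n),
      (μ {ω | (fun j : Fin k => idx j ω) = h}).toReal = ((n:ℝ)⁻¹)^k := by
    intro k h
    rw [measure_history μ idx hidx_meas hidx_unif hidx_indep k h]
    simp [ENNReal.toReal_pow, ENNReal.toReal_inv]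
  have hExp : ∀ (k : ℕ) (Φ : EuclideanSpace ℝ (Fin d) → ℝ),
      Integrable (fun ω => Φ (x k ω)) μ ∧
        ∫ ω, Φ (x k ω) ∂μ = ((n:ℝ)⁻¹)^k * ∑ h : Fin k → Fin n, Φ (X k h) := by
    intro k Φ
    have hrw : (fun ω => Φ (x k ω))
        = fun ω => (fun h : Fin k → Fin n => Φ (X k h)) (fun j : Fin k => idx j ω) := by
      funext ω
      simp only
      rw [hXeq k ω]
    have hcomp := integral_fintype_comp μ (fun ω => (fun j : Fin k => idx j ω)) (hv_meas k)
      (fun h => Φ (X k h))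
    constructor
    · rw [hrw]; exact hcomp.1
    · have hterm : ∀ h : Fin k → Fin n,
          (μ {ω | (fun j : Fin k => idx j ω) = h}).toReal * Φ (X k h)
            = ((n:ℝ)⁻¹)^k * Φ (X k h) := fun h => by rw [hmeasv k h]
      rw [hrw, hcomp.2, Finset.sum_congr rfl fun h (_ : h ∈ Finset.univ) => hterm h,
        ← Finset.mul_sum]
  set Φbar : (Fin t → Fin n) → ℝ := fun h =>
    F (∑ k ∈ Finset.range t, w k • X k (fun j : Fin k =>
      if hj : (j:ℕ) < t then h ⟨j, hj⟩ else h ⟨0, ht⟩)) - F xstar with hPhibar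
  have hlhs_eq : (fun ω => F (∑ k ∈ Finset.range t, w k • x k ω) - F xstar)
      = fun ω => Φbar (fun j : Fin t => idx j ω) := by
    funext ω
    simp only [hPhibar]
    have harg : ∑ k ∈ Finset.range t, w k • x k ω
        = ∑ k ∈ Finset.range t, w k • X k (fun j : Fin k =>
            if hj : (j:ℕ) < t then (fun j' : Fin t => idx j' ω) ⟨j, hj⟩
            else (fun j' : Fin t => idx j' ω) ⟨0, ht⟩) := by
      refine Finset.sum_congr rfl fun k hk => ?_
      have hargfun : (fun j : Fin k => idx (j:ℕ) ω) = (fun j : Fin k =>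
          if hj : (j:ℕ) < t then (fun j' : Fin t => idx (j':ℕ) ω) ⟨j, hj⟩
          else (fun j' : Fin t => idx (j':ℕ) ω) ⟨0, ht⟩) := by
        funext j
        have hj : (j:ℕ) < t := lt_trans j.2 (Finset.mem_range.mp hk)
        rw [dif_pos hj]
      rw [hXeq k ω, hargfun]
    rw [harg]
  have hlhs_int : Integrable (fun ω => F (∑ k ∈ Finset.range t, w k • x k ω) - F xstar) μ := by
    rw [hlhs_eq]
    exact (integral_fintype_comp μ (fun ω => (fun j : Fin t => idx j ω)) (hv_meas t) Φbar).1
  have hrhs_int : Integrable (fun ω => ∑ k ∈ Finset.range t, w k * (F (x k ω) - F xstar)) μ :=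
    integrable_finset_sum _ fun k _ => (hExp k (fun z => w k * (F z - F xstar))).1
  have hrhs_val : ∫ ω, (∑ k ∈ Finset.range t, w k * (F (x k ω) - F xstar)) ∂μ
      = ∑ k ∈ Finset.range t, w k * B k := by
    rw [integral_finset_sum _ fun k _ => (hExp k (fun z => w k * (F z - F xstar))).1]
    refine Finset.sum_congr rfl fun k _ => ?_
    rw [(hExp k (fun z => w k * (F z - F xstar))).2, ← Finset.mul_sum]
    simp only [hBdef]
    ring
  have hmono := integral_mono hlhs_int hrhs_int hJensen
  rw [hrhs_val] at hmono
  show ∫ ω, (F (∑ k ∈ Finset.range t, w k • x k ω) - F xstar) ∂μ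
      ≤ (‖x0 - xstar‖ ^ 2 + 2 * γ 0 * (F x0 - F xstar)
          + 4 * σsq * ∑ k ∈ Finset.range t, γ k ^ 2) / (2 * S)
  refine le_trans hmono ?_
  rw [le_div_iff₀ (by positivity : (0:ℝ) < 2 * S)]
  have hSmul : (∑ k ∈ Finset.range t, w k * B k) * (2 * S)
      = ∑ k ∈ Finset.range t, 2 * γ k * (1 - 4 * γ k * Lm) * B k := by
    rw [Finset.sum_mul]
    refine Finset.sum_congr rfl fun k _ => ?_
    simp only [hwdef]
    field_simp
  rw [hSmul]
  linarith [hmain]
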